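/- For the complete bipartite graph K_{n,n} with partite sets I and J, any TAR reconfiguration sequence from I to J must pass through the empty independent set; hence the TAR reconfiguration threshold of K_{n,n} equals n. -/
import Mathlib


/-- `S` is an independent set in `G`. -/
def IsIndepSet {V : Type*} (G : SimpleGraph V) (S : Finset V) : Prop :=
  ∀ u ∈ S, ∀ v ∈ S, ¬ G.Adj u v

/-- `A` can be `k`-TAR reconfigured to `B` in `G`. -/
def TARReconf {V : Type*} [DecidableEq V] (G : SimpleGraph V) (k : ℕ)
    (A B : Finset V) : Prop :=
  ∃ (n : ℕ) (W : ℕ → Finset V), W 0 = A ∧ W n = B ∧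
    (∀ i ≤ n, IsIndepSet G (W i) ∧ A.card ≤ (W i).card + k) ∧
    (∀ i < n, (symmDiff (W i) (W (i + 1))).card ≤ 1)

/-- Helper: card of symmDiff is at most 1 if everything in it equals a fixed `x`. -/
lemma card_le_one_of_all_eq {α : Type*} [DecidableEq α] (s : Finset α) (x : α)
    (h : ∀ a ∈ s, a = x) : s.card ≤ 1 :=
  Finset.card_le_one.mpr fun a ha b hb => (h a ha).trans (h b hb).symm

/-- The canonical reconfiguration sequence for `K_{n,n}`. -/
def Wseq (n : ℕ) (i : ℕ) : Finset (Fin n ⊕ Fin n) :=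
  if i ≤ n then (Finset.univ.filter (fun j : Fin n => i ≤ (j : ℕ))).image Sum.inl
  else (Finset.univ.filter (fun j : Fin n => (j : ℕ) < i - n)).image Sum.inr

lemma indep_Wseq (n i : ℕ) :
    IsIndepSet (completeBipartiteGraph (Fin n) (Fin n)) (Wseq n i) := by
  intro u hu v hv
  unfold Wseq at hu hv
  split_ifs at hu hv <;>
  · simp only [Finset.mem_image] at hu hv
    obtain ⟨a, -, rfl⟩ := hu
    obtain ⟨b, -, rfl⟩ := hv
    simp

/-- Every TAR sequence from `I` to `J` passes through `∅`. -/
lemma pass_empty (n : ℕ) (m : ℕ) (W : ℕ → Finset (Fin n ⊕ Fin n))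
    (h0 : W 0 = Finset.univ.image Sum.inl) (hm : W m = Finset.univ.image Sum.inr)
    (hind : ∀ i ≤ m, IsIndepSet (completeBipartiteGraph (Fin n) (Fin n)) (W i))
    (hstep : ∀ i < m, (symmDiff (W i) (W (i + 1))).card ≤ 1) :
    ∃ i ≤ m, W i = ∅ := by
  rcases Nat.eq_zero_or_pos n with hn | hn
  · subst hn
    exact ⟨0, Nat.zero_le _, by simp [h0]⟩
  classical
  have hex : ∃ i, ∃ b : Fin n, Sum.inr b ∈ W i :=
    ⟨m, ⟨0, hn⟩, by simp [hm]⟩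
  obtain ⟨b, hb⟩ := Nat.find_spec hex
  have hi₀m : Nat.find hex ≤ m := Nat.find_le ⟨⟨0, hn⟩, by simp [hm]⟩
  have hi₀0 : Nat.find hex ≠ 0 := by
    intro h
    rw [h, h0] at hb
    simp at hb
  obtain ⟨j, hj⟩ : ∃ j, Nat.find hex = j + 1 := ⟨Nat.find hex - 1, by omega⟩
  rw [hj] at hb hi₀m
  have hjno : ¬∃ b : Fin n, Sum.inr b ∈ W j := Nat.find_min hex (by omega : j < Nat.find hex)
  push_neg at hjno
  have hdisj : Disjoint (W j) (W (j + 1)) := by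
    rw [Finset.disjoint_left]
    intro x hx hx'
    rcases x with a | c
    · exact hind (j + 1) hi₀m _ hx' _ hb (by simp)
    · exact hjno c hx
  have hsd := hstep j (by omega)
  rw [hdisj.symmDiff_eq_sup, Finset.sup_eq_union,
    Finset.card_union_of_disjoint hdisj] at hsd
  have hpos : 1 ≤ (W (j + 1)).card := Finset.card_pos.mpr ⟨Sum.inr b, hb⟩
  exact ⟨j, by omega, Finset.card_eq_zero.mp (by omega)⟩

/-- in `K_{n,n}`, every TAR reconfiguration sequence from one partite
set `I` to the other partite set `J` passes through the empty set; consequently the TAR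
reconfiguration threshold of `K_{n,n}` equals `n`. -/
theorem tar_completeBipartite (n : ℕ)
    (I : Finset (Fin n ⊕ Fin n)) (J : Finset (Fin n ⊕ Fin n))
    (hI : I = Finset.univ.image Sum.inl) (hJ : J = Finset.univ.image Sum.inr) :
    (∀ (m : ℕ) (W : ℕ → Finset (Fin n ⊕ Fin n)), W 0 = I → W m = J →
      (∀ i ≤ m, IsIndepSet (completeBipartiteGraph (Fin n) (Fin n)) (W i)) →
      (∀ i < m, (symmDiff (W i) (W (i + 1))).card ≤ 1) →
      ∃ i ≤ m, W i = ∅) ∧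
    TARReconf (completeBipartiteGraph (Fin n) (Fin n)) n I J ∧
    (∀ k : ℕ, TARReconf (completeBipartiteGraph (Fin n) (Fin n)) k I J → n ≤ k) := by
  have hIcard : I.card = n := by
    rw [hI, Finset.card_image_of_injective _ Sum.inl_injective, Finset.card_univ,
      Fintype.card_fin]
  refine ⟨?_, ?_, ?_⟩
  · intro m W h0 hm hind hstep
    exact pass_empty n m W (by rw [h0, hI]) (by rw [hm, hJ]) hind hstep
  · refine ⟨2 * n, Wseq n, ?_, ?_, ?_, ?_⟩
    · rw [hI]; simp [Wseq]
    · rcases Nat.eq_zero_or_pos n with hn | hn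
      · subst hn
        simp [Wseq, hJ]
      · rw [hJ]
        rw [Wseq, if_neg (by omega)]
        congr 1
        ext j
        simp only [Finset.mem_filter, Finset.mem_univ, true_and, iff_true]
        omega
    · intro i _
      exact ⟨indep_Wseq n i, by rw [hIcard]; exact Nat.le_add_left _ _⟩
    · intro i hi
      rcases lt_trichotomy i n with h1 | h1 | h1
      · -- both first branch, remove inl ⟨i⟩
        apply card_le_one_of_all_eq _ (Sum.inl (⟨i, h1⟩ : Fin n))
        intro a ha
        rw [Wseq, Wseq, if_pos (by omega), if_pos (by omega)] at ha
        simp only [Finset.mem_symmDiff, Finset.mem_image, Finset.mem_filter,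
          Finset.mem_univ, true_and, not_exists, not_and] at ha
        rcases ha with ⟨⟨j, hj, rfl⟩, hna⟩ | ⟨⟨j, hj, rfl⟩, hna⟩
        · have hle : ¬ (i + 1 ≤ (j : ℕ)) := fun h => hna j h rfl
          exact congrArg Sum.inl (Fin.ext (show (j : ℕ) = i by omega))
        · exact absurd rfl (hna j (by omega))
      · -- i = n : from ∅ to {inr 0}
        subst h1
        have hn : 0 < i := by omega
        apply card_le_one_of_all_eq _ (Sum.inr (⟨0, hn⟩ : Fin i))
        intro a ha
        rw [Wseq, Wseq, if_pos le_rfl, if_neg (by omega)] at ha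
        simp only [Finset.mem_symmDiff, Finset.mem_image, Finset.mem_filter,
          Finset.mem_univ, true_and, not_exists, not_and] at ha
        rcases ha with ⟨⟨j, hj, rfl⟩, -⟩ | ⟨⟨j, hj, rfl⟩, -⟩
        · omega
        · have hj0 : (j : ℕ) = 0 := by omega
          exact congrArg Sum.inr (Fin.ext hj0)
      · -- both second branch, add inr ⟨i - n⟩
        apply card_le_one_of_all_eq _ (Sum.inr (⟨i - n, by omega⟩ : Fin n))
        intro a ha
        rw [Wseq, Wseq, if_neg (by omega), if_neg (by omega)] at ha
        simp only [Finset.mem_symmDiff, Finset.mem_image, Finset.mem_filter,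
          Finset.mem_univ, true_and, not_exists, not_and] at ha
        rcases ha with ⟨⟨j, hj, rfl⟩, hna⟩ | ⟨⟨j, hj, rfl⟩, hna⟩
        · exact absurd rfl (hna j (by omega))
        · have hlt : ¬ ((j : ℕ) < i - n) := fun h => hna j h rfl
          exact congrArg Sum.inr (Fin.ext (show (j : ℕ) = i - n by omega))
  · rintro k ⟨m, W, h0, hm, hind, hstep⟩
    obtain ⟨i, him, hiempty⟩ := pass_empty n m W (by rw [h0, hI]) (by rw [hm, hJ])
      (fun i hi => (hind i hi).1) hstep
    have := (hind i him).2
    rw [hiempty, hIcard] at this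
    simpa using this
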